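/- Let d be a positive integer and let n = 4d + 3. For i ∈ {1,2}, let 𝒱_i be the family of all subsets of [n] of cardinality d+i+1 that are not contained in any interval [A, f_4(A)] with A a d-subset of [n]. Then there exists an injection φ : 𝒱₁ → 𝒱₂ such that S ⊆ φ(S) for every S ∈ 𝒱₁. -/

import Mathlib

open Fin.NatCast in
/-- The clockwise arc of `l` consecutive points on the circular representation of `[n]`
(modelled as `Fin n`), starting at `s`. -/
def cArc (n : ℕ) [NeZero n] (s : Fin n) (l : ℕ) : Finset (Fin n) :=
  (Finset.range l).image (fun t : ℕ => s + (t : Fin n))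

/-- The interval `[A,B] = {C : A ⊆ C ⊆ B}` in the Boolean lattice of subsets of `[n]`. -/
def fInterval {n : ℕ} (A B : Finset (Fin n)) : Finset (Finset (Fin n)) :=
  B.powerset.filter (fun C => A ⊆ C)

open Fin.NatCast in
/-- A block structure of `A ⊆ [n]` with respect to the density `δ`: a partition of the
circular representation of `[n]` into clockwise-consecutive blocks
`B₁, G₁, B₂, G₂, …, B_k, G_k` satisfying conditions (i)-(iv). Block `Bᵢ` is the arc of
length `blen i` starting at `bstart i`, and the gap `Gᵢ` is the arc of length `glen i`
immediately following `Bᵢ`. -/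
structure BlockStructure (n : ℕ) [NeZero n] (δ : ℝ) (A : Finset (Fin n)) where
  k : ℕ
  kpos : 0 < k
  bstart : Fin k → Fin n
  blen : Fin k → ℕ
  glen : Fin k → ℕ
  blen_pos : ∀ i, 0 < blen i
  /-- the blocks and gaps are clockwise-consecutive: `B_{i+1}` starts right after `Gᵢ` -/
  consec : ∀ i : Fin k,
    bstart ⟨(i.val + 1) % k, Nat.mod_lt _ kpos⟩ = bstart i + ((blen i + glen i : ℕ) : Fin n)
  /-- (i) the first element of each block lies in `A` -/
  start_mem : ∀ i, bstart i ∈ A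
  /-- (ii) the gaps contain no element of `A` -/
  gap_inter : ∀ i, Disjoint (cArc n (bstart i + (blen i : Fin n)) (glen i)) A
  /-- the blocks and gaps cover `[n]` -/
  cover : ∀ x : Fin n,
    (∃ i, x ∈ cArc n (bstart i) (blen i)) ∨
      (∃ i, x ∈ cArc n (bstart i + (blen i : Fin n)) (glen i))
  /-- distinct blocks are disjoint -/
  block_disj : ∀ i j, i ≠ j →
    Disjoint (cArc n (bstart i) (blen i)) (cArc n (bstart j) (blen j))
  /-- distinct gaps are disjoint -/
  gap_disj : ∀ i j, i ≠ j →
    Disjoint (cArc n (bstart i + (blen i : Fin n)) (glen i))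
      (cArc n (bstart j + (blen j : Fin n)) (glen j))
  /-- blocks are disjoint from gaps -/
  block_gap_disj : ∀ i j,
    Disjoint (cArc n (bstart i) (blen i)) (cArc n (bstart j + (blen j : Fin n)) (glen j))
  /-- (iii) lower density bound: `δ·|A ∩ Bᵢ| − 1 < |Bᵢ|` -/
  density_lb : ∀ i,
    δ * ((A ∩ cArc n (bstart i) (blen i)).card : ℝ) - 1 < ((cArc n (bstart i) (blen i)).card : ℝ)
  /-- (iii) upper density bound: `|Bᵢ| ≤ δ·|A ∩ Bᵢ|` -/
  density_ub : ∀ i,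
    ((cArc n (bstart i) (blen i)).card : ℝ) ≤ δ * ((A ∩ cArc n (bstart i) (blen i)).card : ℝ)
  /-- (iv) every proper initial segment `[bᵢ,y] ⊊ Bᵢ` satisfies `|[bᵢ,y]| + 1 ≤ δ·|[bᵢ,y] ∩ A|` -/
  initial_seg : ∀ i, ∀ t : ℕ, t + 1 < blen i →
    ((cArc n (bstart i) (t + 1)).card : ℝ) + 1 ≤ δ * (((cArc n (bstart i) (t + 1)) ∩ A).card : ℝ)

namespace BlockStructure

variable {n : ℕ} [NeZero n] {δ : ℝ} {A : Finset (Fin n)}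

/-- The block `Bᵢ`. -/
def block (P : BlockStructure n δ A) (i : Fin P.k) : Finset (Fin n) :=
  cArc n (P.bstart i) (P.blen i)

open Fin.NatCast in
/-- The gap `Gᵢ`. -/
def gap (P : BlockStructure n δ A) (i : Fin P.k) : Finset (Fin n) :=
  cArc n (P.bstart i + (P.blen i : Fin n)) (P.glen i)

/-- `𝒢_δ(A) = G₁ ∪ ⋯ ∪ G_k`, the union of the gaps. -/
def gapsUnion (P : BlockStructure n δ A) : Finset (Fin n) :=
  Finset.univ.biUnion P.gap

/-- `f_δ(A) = A ∪ 𝒢_δ(A)`. -/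
def fset (P : BlockStructure n δ A) : Finset (Fin n) :=
  A ∪ P.gapsUnion

end BlockStructure

open Fin.NatCast
open Fin.CommRing



namespace CArcAux
open Finset
variable {n : ℕ} [NeZero n]

lemma npos : 0 < n := Nat.pos_of_ne_zero (NeZero.ne n)

lemma mem_cArc {s x : Fin n} {l : ℕ} : x ∈ cArc n s l ↔ ∃ t, t < l ∧ s + (t : Fin n) = x := by
  simp [cArc, Finset.mem_image, Finset.mem_range]

lemma val_natCast_of_lt {t : ℕ} (h : t < n) : ((t : Fin n)).val = t := by
  simp [Fin.val_natCast, Nat.mod_eq_of_lt h]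

lemma sub_add_cancel' (s : Fin n) (t : ℕ) (h : t < n) : ((s + (t : Fin n)) - s).val = t := by
  have : s + (t : Fin n) - s = (t : Fin n) := by ring
  rw [this, val_natCast_of_lt h]

lemma mem_cArc_val {s x : Fin n} {l : ℕ} (hl : l ≤ n) : x ∈ cArc n s l ↔ (x - s).val < l := by
  rw [mem_cArc]
  constructor
  · rintro ⟨t, ht, rfl⟩
    rwa [sub_add_cancel' s t (lt_of_lt_of_le ht hl)]
  · intro h
    exact ⟨(x - s).val, h, by rw [Fin.cast_val_eq_self]; ring⟩

lemma card_cArc {s : Fin n} {l : ℕ} (hl : l ≤ n) : (cArc n s l).card = l := by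
  rw [cArc, Finset.card_image_of_injOn, Finset.card_range]
  intro a ha b hb hab
  simp only [Finset.coe_range, Set.mem_Iio] at ha hb
  have : ((a : Fin n)) = (b : Fin n) := by exact add_left_cancel hab
  have := congrArg Fin.val this
  rwa [val_natCast_of_lt (lt_of_lt_of_le ha hl), val_natCast_of_lt (lt_of_lt_of_le hb hl)] at this

lemma cArc_eq_univ {s : Fin n} {l : ℕ} (hl : n ≤ l) : cArc n s l = Finset.univ := by
  ext x
  simp only [Finset.mem_univ, iff_true, mem_cArc]
  exact ⟨(x - s).val, lt_of_lt_of_le (x - s).isLt hl, by rw [Fin.cast_val_eq_self]; ring⟩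

lemma cArc_add (s : Fin n) (a b : ℕ) :
    cArc n s (a + b) = cArc n s a ∪ cArc n (s + (a : Fin n)) b := by
  ext x
  simp only [Finset.mem_union, mem_cArc]
  constructor
  · rintro ⟨t, ht, rfl⟩
    rcases lt_or_ge t a with h | h
    · exact Or.inl ⟨t, h, rfl⟩
    · refine Or.inr ⟨t - a, by omega, ?_⟩
      have : ((t - a : ℕ) : Fin n) = (t : Fin n) - (a : Fin n) := by
        have : ((a : ℕ) : Fin n) + ((t - a : ℕ) : Fin n) = ((a + (t - a) : ℕ) : Fin n) := by
          push_cast; ring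
        rw [Nat.add_sub_cancel' h] at this
        linear_combination this
      rw [this]; ring
  · rintro (⟨t, ht, rfl⟩ | ⟨t, ht, rfl⟩)
    · exact ⟨t, by omega, rfl⟩
    · exact ⟨a + t, by omega, by push_cast; ring⟩

lemma cArc_disjoint {s : Fin n} {a b : ℕ} (hab : a + b ≤ n) :
    Disjoint (cArc n s a) (cArc n (s + (a : Fin n)) b) := by
  have h1 : (cArc n s (a + b)).card = a + b := card_cArc hab
  rw [cArc_add] at h1
  have h2 : (cArc n s a).card = a := card_cArc (by omega)
  have h3 : (cArc n (s + (a : Fin n)) b).card = b := card_cArc (by omega)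
  have := Finset.card_union_add_card_inter (cArc n s a) (cArc n (s + (a : Fin n)) b)
  rw [h1, h2, h3] at this
  have : (cArc n s a ∩ cArc n (s + (a : Fin n)) b).card = 0 := by omega
  rw [Finset.card_eq_zero] at this
  exact Finset.disjoint_iff_inter_eq_empty.mpr this

lemma card_inter_split {s : Fin n} {a b : ℕ} (hab : a + b ≤ n) (X : Finset (Fin n)) :
    (cArc n s (a + b) ∩ X).card
      = (cArc n s a ∩ X).card + (cArc n (s + (a : Fin n)) b ∩ X).card := by
  rw [cArc_add, Finset.union_inter_distrib_right]
  exact Finset.card_union_of_disjoint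
    (Finset.disjoint_of_subset_left Finset.inter_subset_left
      (Finset.disjoint_of_subset_right Finset.inter_subset_left (cArc_disjoint hab)))

lemma cArc_subset {s : Fin n} {u m l : ℕ} (h : u + m ≤ l) :
    cArc n (s + (u : Fin n)) m ⊆ cArc n s l := by
  intro x hx
  rw [mem_cArc] at hx ⊢
  obtain ⟨t, ht, rfl⟩ := hx
  exact ⟨u + t, by omega, by push_cast; ring⟩

lemma cArc_mono {s : Fin n} {l l' : ℕ} (h : l ≤ l') : cArc n s l ⊆ cArc n s l' := by
  intro x hx; rw [mem_cArc] at hx ⊢; obtain ⟨t, ht, rfl⟩ := hx; exact ⟨t, by omega, rfl⟩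

lemma val_sub_natCast {a : Fin n} {r : ℕ} (h : r ≤ a.val) : (a - (r : Fin n)).val = a.val - r := by
  have hr : ((r : Fin n)).val = r := val_natCast_of_lt (lt_of_le_of_lt h a.isLt)
  have hs : (a - (r : Fin n)).val = (a.val + (n - ((r : Fin n)).val)) % n := by rw [Fin.sub_def]; simp [Nat.add_comm]
  rw [hs, hr]
  have ha := a.isLt
  have : a.val + (n - r) = (a.val - r) + n := by omega
  rw [this, Nat.add_mod_right, Nat.mod_eq_of_lt (by omega)]

end CArcAux

namespace BlockStructure
open Finset CArcAux

variable {n d : ℕ} [NeZero n] {A : Finset (Fin n)}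

/-- condition that `w` looks like a gap element with respect to `A`. -/
def GapCond (A : Finset (Fin n)) (w : Fin n) : Prop :=
  ∀ a ∈ A, 4 * ((cArc n a ((w - a).val + 1)) ∩ A).card + 1 ≤ (w - a).val + 1

section Cards

variable (P : BlockStructure n (4 : ℝ) A)

lemma block_card_eq (i : Fin P.k) : (P.block i).card = 4 * (A ∩ P.block i).card := by
  have h1 := P.density_lb i
  have h2 := P.density_ub i
  have hub : ((P.block i).card : ℝ) ≤ 4 * ((A ∩ P.block i).card : ℝ) := h2
  have hlb : 4 * ((A ∩ P.block i).card : ℝ) - 1 < ((P.block i).card : ℝ) := h1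
  have hub' : (P.block i).card ≤ 4 * (A ∩ P.block i).card := by exact_mod_cast hub
  have hlb' : 4 * (A ∩ P.block i).card < (P.block i).card + 1 := by
    have : 4 * ((A ∩ P.block i).card : ℝ) < ((P.block i).card : ℝ) + 1 := by linarith
    exact_mod_cast this
  omega

lemma blocks_cover_A : A ⊆ Finset.univ.biUnion P.block := by
  intro x hx
  rcases P.cover x with ⟨i, hi⟩ | ⟨i, hi⟩
  · exact Finset.mem_biUnion.mpr ⟨i, Finset.mem_univ i, hi⟩
  · exact absurd hx (Finset.disjoint_left.mp (P.gap_inter i) hi)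

lemma sum_block_card (hA : A.card = d) : ∑ i, (P.block i).card = 4 * d := by
  have hdisj : ∀ x ∈ (univ : Finset (Fin P.k)), ∀ y ∈ univ, x ≠ y →
      Disjoint (A ∩ P.block x) (A ∩ P.block y) := by
    intro x _ y _ hxy
    exact Finset.disjoint_of_subset_left Finset.inter_subset_right
      (Finset.disjoint_of_subset_right Finset.inter_subset_right (P.block_disj x y hxy))
  have hU : Finset.univ.biUnion (fun i => A ∩ P.block i) = A := by
    apply Finset.Subset.antisymm
    · intro x hx
      rcases Finset.mem_biUnion.mp hx with ⟨i, _, hi⟩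
      exact (Finset.mem_inter.mp hi).1
    · intro x hx
      rcases Finset.mem_biUnion.mp (P.blocks_cover_A hx) with ⟨i, _, hi⟩
      exact Finset.mem_biUnion.mpr ⟨i, Finset.mem_univ i, Finset.mem_inter.mpr ⟨hx, hi⟩⟩
  have hcard : ∑ i, (A ∩ P.block i).card = d := by
    rw [← Finset.card_biUnion hdisj, hU, hA]
  calc ∑ i, (P.block i).card = ∑ i, 4 * (A ∩ P.block i).card := by
        exact Finset.sum_congr rfl fun i _ => P.block_card_eq i
    _ = 4 * d := by rw [← Finset.mul_sum, hcard]

lemma card_gapsUnion (hn : n = 4 * d + 3) (hA : A.card = d) : (P.gapsUnion).card = 3 := by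
  have hBdisj : ∀ x ∈ (univ : Finset (Fin P.k)), ∀ y ∈ univ, x ≠ y →
      Disjoint (P.block x) (P.block y) := fun x _ y _ h => P.block_disj x y h
  have hGdisj : ∀ x ∈ (univ : Finset (Fin P.k)), ∀ y ∈ univ, x ≠ y →
      Disjoint (P.gap x) (P.gap y) := fun x _ y _ h => P.gap_disj x y h
  have hBG : Disjoint (Finset.univ.biUnion P.block) P.gapsUnion := by
    rw [BlockStructure.gapsUnion, Finset.disjoint_biUnion_left]
    intro i _
    rw [Finset.disjoint_biUnion_right]
    intro j _
    exact P.block_gap_disj i j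
  have hcover : (Finset.univ.biUnion P.block) ∪ P.gapsUnion = Finset.univ := by
    apply Finset.eq_univ_of_forall
    intro x
    rcases P.cover x with ⟨i, hi⟩ | ⟨i, hi⟩
    · exact Finset.mem_union_left _ (Finset.mem_biUnion.mpr ⟨i, Finset.mem_univ i, hi⟩)
    · exact Finset.mem_union_right _ (Finset.mem_biUnion.mpr ⟨i, Finset.mem_univ i, hi⟩)
  have hn' : ((Finset.univ.biUnion P.block) ∪ P.gapsUnion).card = n := by
    rw [hcover, Finset.card_univ, Fintype.card_fin]
  rw [Finset.card_union_of_disjoint hBG, Finset.card_biUnion hBdisj,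
    P.sum_block_card hA] at hn'
  omega

lemma A_disj_gapsUnion : Disjoint A P.gapsUnion := by
  rw [BlockStructure.gapsUnion, Finset.disjoint_biUnion_right]
  exact fun i _ => (P.gap_inter i).symm

lemma card_fset (hn : n = 4 * d + 3) (hA : A.card = d) : (P.fset).card = d + 3 := by
  rw [BlockStructure.fset, Finset.card_union_of_disjoint (P.A_disj_gapsUnion), hA,
    P.card_gapsUnion hn hA]

lemma block_card_le (hA : A.card = d) (i : Fin P.k) : (P.block i).card ≤ 4 * d := by
  rw [← P.sum_block_card hA]
  exact Finset.single_le_sum (f := fun j => (P.block j).card) (fun j _ => Nat.zero_le _)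
    (Finset.mem_univ i)

lemma blen_le (hn : n = 4 * d + 3) (hA : A.card = d) (i : Fin P.k) : P.blen i ≤ n := by
  by_contra h
  have : (P.block i) = Finset.univ := cArc_eq_univ (by omega)
  have hc : (P.block i).card = n := by rw [this, Finset.card_univ, Fintype.card_fin]
  have := P.block_card_le hA i
  omega

lemma blen_eq (hn : n = 4 * d + 3) (hA : A.card = d) (i : Fin P.k) :
    P.blen i = (P.block i).card := (card_cArc (P.blen_le hn hA i)).symm

lemma blen_lt (hn : n = 4 * d + 3) (hA : A.card = d) (i : Fin P.k) : P.blen i < n := by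
  have := P.blen_eq hn hA i
  have := P.block_card_le hA i
  omega

lemma gap_card_le (hn : n = 4 * d + 3) (hA : A.card = d) (i : Fin P.k) : (P.gap i).card ≤ 3 := by
  refine le_of_le_of_eq ?_ (P.card_gapsUnion hn hA)
  exact Finset.card_le_card (by
    rw [BlockStructure.gapsUnion]
    exact Finset.subset_biUnion_of_mem P.gap (Finset.mem_univ i))

lemma glen_le (hd : 0 < d) (hn : n = 4 * d + 3) (hA : A.card = d) (i : Fin P.k) :
    P.glen i ≤ n := by
  by_contra h
  have : (P.gap i) = Finset.univ := cArc_eq_univ (by omega)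
  have hc : (P.gap i).card = n := by rw [this, Finset.card_univ, Fintype.card_fin]
  have := P.gap_card_le hn hA i
  omega

lemma glen_eq (hd : 0 < d) (hn : n = 4 * d + 3) (hA : A.card = d) (i : Fin P.k) :
    P.glen i = (P.gap i).card := (card_cArc (P.glen_le hd hn hA i)).symm

lemma glen_le3 (hd : 0 < d) (hn : n = 4 * d + 3) (hA : A.card = d) (i : Fin P.k) :
    P.glen i ≤ 3 := by
  rw [P.glen_eq hd hn hA i]; exact P.gap_card_le hn hA i

end Cards


section Walk

variable (P : BlockStructure n (4 : ℝ) A)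

lemma mem_gapsUnion_of_gapCond (hn : n = 4 * d + 3) (hA : A.card = d) {w : Fin n}
    (hw : GapCond A w) : w ∈ P.gapsUnion := by
  rcases P.cover w with ⟨j, hj⟩ | ⟨j, hj⟩
  · exfalso
    have hble := P.blen_le hn hA j
    have ht : (w - P.bstart j).val < P.blen j := (mem_cArc_val hble).mp hj
    set t := (w - P.bstart j).val with htdef
    have hspec := hw (P.bstart j) (P.start_mem j)
    rw [← htdef] at hspec
    rcases Nat.lt_or_ge (t + 1) (P.blen j) with hlt | hge
    · have hseg := P.initial_seg j t hlt
      have hcard : (cArc n (P.bstart j) (t + 1)).card = t + 1 := card_cArc (by omega)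
      rw [hcard] at hseg
      have : (t : ℝ) + 1 + 1 ≤ 4 * ((cArc n (P.bstart j) (t + 1) ∩ A).card : ℝ) := by
        exact_mod_cast hseg
      have h2 : t + 2 ≤ 4 * (cArc n (P.bstart j) (t + 1) ∩ A).card := by exact_mod_cast this
      omega
    · have heq : t + 1 = P.blen j := by omega
      have hub := P.density_ub j
      have hub' : (P.block j).card ≤ 4 * (A ∩ P.block j).card := by exact_mod_cast hub
      have hbc : (P.block j).card = P.blen j := by
        rw [← P.blen_eq hn hA j]
      have hcomm : (A ∩ P.block j) = (cArc n (P.bstart j) (t + 1) ∩ A) := by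
        rw [heq]; exact Finset.inter_comm _ _
      rw [hbc, hcomm] at hub'
      omega
  · rw [BlockStructure.gapsUnion]
    exact Finset.mem_biUnion.mpr ⟨j, Finset.mem_univ j, hj⟩

lemma suffix_bound (hn : n = 4 * d + 3) (hA : A.card = d) (j : Fin P.k) {u : ℕ}
    (hu : u < P.blen j) :
    4 * ((cArc n (P.bstart j + (u : Fin n)) (P.blen j - u) ∩ A)).card ≤ P.blen j - u := by
  have hble := P.blen_le hn hA j
  have hsplit := card_inter_split (n := n) (s := P.bstart j) (a := u) (b := P.blen j - u)
    (by omega) A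
  rw [Nat.add_sub_cancel' (le_of_lt hu)] at hsplit
  have hbc : P.blen j = 4 * (A ∩ P.block j).card := by
    rw [P.blen_eq hn hA j]; exact P.block_card_eq j
  have hcomm : (A ∩ P.block j) = (cArc n (P.bstart j) (P.blen j) ∩ A) := Finset.inter_comm _ _
  rw [hcomm] at hbc
  rcases Nat.eq_zero_or_pos u with h0 | hpos
  · subst h0
    have hz : (cArc n (P.bstart j) 0 ∩ A).card = 0 := by simp [cArc]
    omega
  · have hseg := P.initial_seg j (u - 1) (by omega)
    rw [Nat.sub_add_cancel hpos] at hseg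
    have hcard : (cArc n (P.bstart j) u).card = u := card_cArc (by omega)
    rw [hcard] at hseg
    have hseg' : u + 1 ≤ 4 * (cArc n (P.bstart j) u ∩ A).card := by exact_mod_cast hseg
    omega

lemma walk (hd : 0 < d) (hn : n = 4 * d + 3) (hA : A.card = d) {y : Fin n}
    (hy : y ∈ P.gapsUnion) (x : Fin n) :
    4 * ((cArc n x ((y - x).val + 1)) ∩ A).card + 1 ≤ (y - x).val + 1 := by
  rw [BlockStructure.gapsUnion] at hy
  obtain ⟨i₀, -, hy0⟩ := Finset.mem_biUnion.mp hy
  suffices H : ∀ m x, (y - x).val = m → 4 * ((cArc n x (m + 1)) ∩ A).card + 1 ≤ m + 1 from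
    H _ x rfl
  intro m
  induction m using Nat.strong_induction_on with
  | _ m ih =>
    intro x hm
    have hxn : m < n := hm ▸ (y - x).isLt
    have hynotblock : ∀ j, y ∉ P.block j := fun j hyb =>
      Finset.disjoint_left.mp (P.block_gap_disj j i₀) hyb hy0
    rcases P.cover x with ⟨j, hj⟩ | ⟨j, hj⟩
    · -- x in block j
      have hble := P.blen_le hn hA j
      have hgle3 := P.glen_le3 hd hn hA j
      have hblt := P.blen_lt hn hA j
      have hbcle := P.block_card_le hA j
      have hbeq := P.blen_eq hn hA j
      have hbgn : P.blen j + P.glen j ≤ n := by omega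
      have hu : (x - P.bstart j).val < P.blen j := (mem_cArc_val hble).mp hj
      set s := P.bstart j with hsdef
      set u := (x - s).val with hudef
      have hx : x = s + (u : Fin n) := by
        rw [hudef, Fin.cast_val_eq_self]; ring
      by_cases hcase : m < P.blen j - u
      · exfalso
        have hym : y = x + (m : Fin n) := by
          rw [← hm, Fin.cast_val_eq_self]; ring
        have : y ∈ cArc n s (P.blen j) := by
          refine mem_cArc.mpr ⟨u + m, by omega, ?_⟩
          rw [hym, hx]; push_cast; ring
        exact hynotblock j this
      · have hx2 : x + ((P.blen j - u : ℕ) : Fin n) = s + ((P.blen j : ℕ) : Fin n) := by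
          rw [hx]
          have : ((u : ℕ) : Fin n) + ((P.blen j - u : ℕ) : Fin n)
              = ((P.blen j : ℕ) : Fin n) := by
            rw [← Nat.cast_add]; congr 1; omega
          rw [add_assoc, this]
        have h1 : 4 * ((cArc n x (P.blen j - u) ∩ A)).card ≤ P.blen j - u := by
          rw [hx]; exact P.suffix_bound hn hA j hu
        by_cases hcase2 : m < P.blen j + P.glen j - u
        · have hsplit := card_inter_split (n := n) (s := x) (a := P.blen j - u)
            (b := m + 1 - (P.blen j - u)) (by omega) A
          rw [Nat.add_sub_cancel' (by omega : P.blen j - u ≤ m + 1)] at hsplit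
          have h2 : (cArc n (x + ((P.blen j - u : ℕ) : Fin n)) (m + 1 - (P.blen j - u))
              ∩ A).card = 0 := by
            rw [Finset.card_eq_zero, ← Finset.disjoint_iff_inter_eq_empty]
            refine Finset.disjoint_of_subset_left ?_ (P.gap_inter j)
            rw [hx2]
            exact cArc_mono (by omega)
          omega
        · set r := P.blen j + P.glen j - u with hrdef
          have hr1 : 1 ≤ r := by omega
          have hrm : r ≤ m := by omega
          have hsplit := card_inter_split (n := n) (s := x) (a := r) (b := m + 1 - r)
            (by omega) A
          rw [Nat.add_sub_cancel' (by omega : r ≤ m + 1)] at hsplit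
          have hsplit1 := card_inter_split (n := n) (s := x) (a := P.blen j - u)
            (b := P.glen j) (by omega) A
          have hr_eq : (P.blen j - u) + P.glen j = r := by omega
          rw [hr_eq] at hsplit1
          have h2 : (cArc n (x + ((P.blen j - u : ℕ) : Fin n)) (P.glen j) ∩ A).card = 0 := by
            rw [Finset.card_eq_zero, ← Finset.disjoint_iff_inter_eq_empty]
            refine Finset.disjoint_of_subset_left ?_ (P.gap_inter j)
            rw [hx2]
          have hyr : (y - (x + (r : Fin n))).val = m - r := by
            have hfin : y - (x + (r : Fin n)) = (y - x) - (r : Fin n) := by ring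
            rw [hfin, val_sub_natCast (by omega : r ≤ (y - x).val), hm]
          have hIH := ih (m - r) (by omega) (x + (r : Fin n)) hyr
          have hmr : m + 1 - r = (m - r) + 1 := by omega
          rw [hmr] at hsplit
          omega
    · -- x in gap j
      have hgle := P.glen_le hd hn hA j
      have hu : (x - (P.bstart j + (P.blen j : Fin n))).val < P.glen j :=
        (mem_cArc_val hgle).mp hj
      set gs := P.bstart j + (P.blen j : Fin n) with hgsdef
      set u := (x - gs).val with hudef
      have hx : x = gs + (u : Fin n) := by
        rw [hudef, Fin.cast_val_eq_self]; ring
      by_cases hcase : m < P.glen j - u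
      · have h0 : (cArc n x (m + 1) ∩ A).card = 0 := by
          rw [Finset.card_eq_zero, ← Finset.disjoint_iff_inter_eq_empty]
          refine Finset.disjoint_of_subset_left ?_ (P.gap_inter j)
          rw [hx]
          exact cArc_subset (by omega)
        omega
      · set r := P.glen j - u with hrdef
        have hr1 : 1 ≤ r := by omega
        have hrm : r ≤ m := by omega
        have hsplit := card_inter_split (n := n) (s := x) (a := r) (b := m + 1 - r)
          (by omega) A
        rw [Nat.add_sub_cancel' (by omega : r ≤ m + 1)] at hsplit
        have h2 : (cArc n x r ∩ A).card = 0 := by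
          rw [Finset.card_eq_zero, ← Finset.disjoint_iff_inter_eq_empty]
          refine Finset.disjoint_of_subset_left ?_ (P.gap_inter j)
          rw [hx]
          exact cArc_subset (by omega)
        have hyr : (y - (x + (r : Fin n))).val = m - r := by
          have hfin : y - (x + (r : Fin n)) = (y - x) - (r : Fin n) := by ring
          rw [hfin, val_sub_natCast (by omega : r ≤ (y - x).val), hm]
        have hIH := ih (m - r) (by omega) (x + (r : Fin n)) hyr
        have hmr : m + 1 - r = (m - r) + 1 := by omega
        rw [hmr] at hsplit
        omega

end Walk
end BlockStructure

private lemma subclaim_arith (n p q q' dwy m qy : ℕ)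
    (l1 : q < n) (l2 : dwy < n) (l3 : q' < n) (l4 : p < n) (l5 : m < n) (l6 : qy < n)
    (e1 : m = (q' + p) % n) (e2 : q = (dwy + q') % n) (e3 : qy = (q + p) % n)
    (hstrict : q < dwy) (hpm : p ≤ m) : qy ≤ m := by
  have e1' : m = q' + p := by
    rcases Nat.lt_or_ge (q' + p) n with h | h
    · rw [e1, Nat.mod_eq_of_lt h]
    · exfalso
      have hh : (q' + p) % n = q' + p - n := by
        rw [Nat.mod_eq_sub_mod h, Nat.mod_eq_of_lt (by omega)]
      omega
  have e2' : q = dwy + q' - n ∧ n ≤ dwy + q' := by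
    rcases Nat.lt_or_ge (dwy + q') n with h | h
    · exfalso
      have hh : q = dwy + q' := by rw [e2, Nat.mod_eq_of_lt h]
      omega
    · have hh : (dwy + q') % n = dwy + q' - n := by
        rw [Nat.mod_eq_sub_mod h, Nat.mod_eq_of_lt (by omega)]
      exact ⟨by omega, h⟩
  have hqq' : q ≤ q' := by omega
  have hlt : q + p < n := by omega
  rw [e3, Nat.mod_eq_of_lt hlt]
  omega

open Finset CArcAux BlockStructure in
lemma claim2 {n d : ℕ} [NeZero n] (hd : 0 < d) (hn : n = 4 * d + 3)
    (F : Finset (Fin n) → Finset (Fin n))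
    (hF : ∀ A : Finset (Fin n), A.card = d → ∃ P : BlockStructure n (4 : ℝ) A, F A = P.fset)
    (A : Finset (Fin n)) (hA : A.card = d) (y : Fin n) :
    ∃ A' : Finset (Fin n), A'.card = d ∧ A' ⊆ (F A).erase y ∧ (F A).erase y ⊆ F A' := by
  obtain ⟨P, hP⟩ := hF A hA
  by_cases hyA : y ∈ A
  case neg =>
    refine ⟨A, hA, ?_, fun v hv => (Finset.mem_erase.mp hv).2⟩
    intro a ha
    exact Finset.mem_erase.mpr ⟨fun h => hyA (h ▸ ha),
      by rw [hP]; exact Finset.mem_union_left _ ha⟩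
  case pos =>
    have hGcard : P.gapsUnion.card = 3 := P.card_gapsUnion hn hA
    have hGne : P.gapsUnion.Nonempty := by rw [← Finset.card_pos, hGcard]; omega
    obtain ⟨z, hzG, hzmin⟩ := Finset.exists_min_image P.gapsUnion (fun w => (y - w).val) hGne
    have hzA : z ∉ A := fun h => Finset.disjoint_left.mp P.A_disj_gapsUnion h hzG
    set A' := insert z (A.erase y) with hA'def
    have hzerase : z ∉ A.erase y := fun h => hzA (Finset.mem_of_mem_erase h)
    have hA'card : A'.card = d := by
      rw [hA'def, Finset.card_insert_of_notMem hzerase, Finset.card_erase_of_mem hyA, hA]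
      omega
    obtain ⟨P', hP'⟩ := hF A' hA'card
    -- strict minimality of z
    have hzstrict : ∀ w ∈ P.gapsUnion, w ≠ z → (y - z).val < (y - w).val := by
      intro w hw hwz
      rcases lt_or_eq_of_le (hzmin w hw) with h | h
      · exact h
      · exact absurd (sub_right_injective (Fin.val_injective h.symm)) hwz
    -- subclaim : if z ∈ [a,w] then y ∈ [a,w]
    have hsubclaim : ∀ w ∈ P.gapsUnion, w ≠ z → ∀ a : Fin n,
        (z - a).val ≤ (w - a).val → (y - a).val ≤ (w - a).val := by
      intro w hw hwz a hpm
      have e1 : (w - a).val = ((w - z).val + (z - a).val) % n := by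
        have h : w - a = (w - z) + (z - a) := by ring
        rw [h, Fin.val_add]
      have e2 : (y - z).val = ((y - w).val + (w - z).val) % n := by
        have h : y - z = (y - w) + (w - z) := by ring
        rw [h, Fin.val_add]
      have e3 : (y - a).val = ((y - z).val + (z - a).val) % n := by
        have h : y - a = (y - z) + (z - a) := by ring
        rw [h, Fin.val_add]
      exact subclaim_arith n ((z - a).val) ((y - z).val) ((w - z).val) ((y - w).val)
        ((w - a).val) ((y - a).val) (y - z).isLt (y - w).isLt (w - z).isLt (z - a).isLt
        (w - a).isLt (y - a).isLt e1 e2 e3 (hzstrict w hw hwz) hpm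
    refine ⟨A', hA'card, ?_, ?_⟩
    · intro a ha
      rcases Finset.mem_insert.mp ha with rfl | ha'
      · refine Finset.mem_erase.mpr ⟨fun h => hzA (h ▸ hyA), ?_⟩
        rw [hP]
        exact Finset.mem_union_right _ hzG
      · exact Finset.mem_erase.mpr ⟨(Finset.mem_erase.mp ha').1,
          by rw [hP]; exact Finset.mem_union_left _ (Finset.mem_of_mem_erase ha')⟩
    · intro v hv
      obtain ⟨hvy, hvF⟩ := Finset.mem_erase.mp hv
      rw [hP] at hvF
      rcases Finset.mem_union.mp hvF with hvA | hvG
      · rw [hP']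
        exact Finset.mem_union_left _
          (Finset.mem_insert_of_mem (Finset.mem_erase.mpr ⟨hvy, hvA⟩))
      · by_cases hvz : v = z
        · rw [hP']
          exact Finset.mem_union_left _ (hvz ▸ Finset.mem_insert_self z _)
        · -- v ∈ gaps of P, v ≠ z : show GapCond A' v
          have hcond : GapCond A' v := by
            intro a haA'
            have hwalk := P.walk hd hn hA hvG a
            have hmn : (v - a).val + 1 ≤ n := (v - a).isLt
            have hcard_le : (cArc n a ((v - a).val + 1) ∩ A').card
                ≤ (cArc n a ((v - a).val + 1) ∩ A).card := by
              by_cases hz : z ∈ cArc n a ((v - a).val + 1)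
              · have hy_mem : y ∈ cArc n a ((v - a).val + 1) := by
                  rw [mem_cArc_val hmn]
                  have hz' := (mem_cArc_val hmn).mp hz
                  have := hsubclaim v hvG hvz a (by omega)
                  omega
                have hsub : cArc n a ((v - a).val + 1) ∩ A'
                    ⊆ insert z ((cArc n a ((v - a).val + 1) ∩ A).erase y) := by
                  intro b hb
                  obtain ⟨hb1, hb2⟩ := Finset.mem_inter.mp hb
                  rcases Finset.mem_insert.mp hb2 with rfl | hb3
                  · exact Finset.mem_insert_self _ _
                  · exact Finset.mem_insert_of_mem (Finset.mem_erase.mpr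
                      ⟨(Finset.mem_erase.mp hb3).1,
                        Finset.mem_inter.mpr ⟨hb1, Finset.mem_of_mem_erase hb3⟩⟩)
                have hymem : y ∈ cArc n a ((v - a).val + 1) ∩ A :=
                  Finset.mem_inter.mpr ⟨hy_mem, hyA⟩
                calc (cArc n a ((v - a).val + 1) ∩ A').card
                    ≤ (insert z ((cArc n a ((v - a).val + 1) ∩ A).erase y)).card :=
                      Finset.card_le_card hsub
                  _ ≤ ((cArc n a ((v - a).val + 1) ∩ A).erase y).card + 1 :=
                      Finset.card_insert_le _ _
                  _ = (cArc n a ((v - a).val + 1) ∩ A).card := by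
                      rw [Finset.card_erase_of_mem hymem]
                      have : 1 ≤ (cArc n a ((v - a).val + 1) ∩ A).card :=
                        Finset.card_pos.mpr ⟨y, hymem⟩
                      omega
              · apply Finset.card_le_card
                intro b hb
                obtain ⟨hb1, hb2⟩ := Finset.mem_inter.mp hb
                rcases Finset.mem_insert.mp hb2 with rfl | hb3
                · exact absurd hb1 hz
                · exact Finset.mem_inter.mpr ⟨hb1, Finset.mem_of_mem_erase hb3⟩
            omega
          rw [hP']
          exact Finset.mem_union_right _ (P'.mem_gapsUnion_of_gapCond hn hA'card hcond)

/-- Let `d` be a positive integer and `n = 4d + 3`. For `i ∈ {1,2}`, let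
`𝒱ᵢ` be the family of subsets of `[n]` of cardinality `d + i + 1` not contained in any
interval `[A, f_4(A)]` with `A` a `d`-subset of `[n]`. Then there is an injection
`φ : 𝒱₁ → 𝒱₂` with `S ⊆ φ(S)` for all `S ∈ 𝒱₁`. Here `F` assigns to each `d`-subset `A`
the set `f_4(A)` coming from a block structure of `A` with density `4`. -/
theorem matching_uncovered_sets (d n : ℕ) (hd : 0 < d) (hn : n = 4 * d + 3) [NeZero n]
    (F : Finset (Fin n) → Finset (Fin n))
    (hF : ∀ A : Finset (Fin n), A.card = d → ∃ P : BlockStructure n (4 : ℝ) A, F A = P.fset) :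
    ∃ φ : Finset (Fin n) → Finset (Fin n),
      Set.InjOn φ {S : Finset (Fin n) |
        S.card = d + 2 ∧ ∀ A : Finset (Fin n), A.card = d → S ∉ fInterval A (F A)} ∧
      ∀ S : Finset (Fin n),
        (S.card = d + 2 ∧ ∀ A : Finset (Fin n), A.card = d → S ∉ fInterval A (F A)) →
          S ⊆ φ S ∧ (φ S).card = d + 3 ∧
            ∀ A : Finset (Fin n), A.card = d → φ S ∉ fInterval A (F A) := by
  classical
  have hcardF : ∀ A : Finset (Fin n), A.card = d → (F A).card = d + 3 := by
    intro A hA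
    obtain ⟨P, hP⟩ := hF A hA
    rw [hP]
    exact P.card_fset hn hA
  have hsup : ∀ S : Finset (Fin n), S.card = d + 2 →
      (∀ A : Finset (Fin n), A.card = d → S ∉ fInterval A (F A)) →
      ∀ x : Fin n, x ∉ S → ∀ A : Finset (Fin n), A.card = d →
        insert x S ∉ fInterval A (F A) := by
    intro S hScard hSunc x hx A hA hmem
    rw [fInterval, Finset.mem_filter, Finset.mem_powerset] at hmem
    obtain ⟨hsub, hAsub⟩ := hmem
    have hcard : (insert x S).card = d + 3 := by
      rw [Finset.card_insert_of_notMem hx, hScard]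
    have heq : insert x S = F A :=
      Finset.eq_of_subset_of_card_le hsub (by rw [hcardF A hA, hcard])
    obtain ⟨A', hA'card, hA'sub, hA'sup⟩ := claim2 hd hn F hF A hA x
    have hSer : (F A).erase x = S := by
      rw [← heq, Finset.erase_insert hx]
    rw [hSer] at hA'sub hA'sup
    exact hSunc A' hA'card (by
      rw [fInterval, Finset.mem_filter, Finset.mem_powerset]
      exact ⟨hA'sup, hA'sub⟩)
  set V1 : Finset (Finset (Fin n)) := Finset.univ.filter (fun S =>
    S.card = d + 2 ∧ ∀ A : Finset (Fin n), A.card = d → S ∉ fInterval A (F A)) with hV1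
  set t : {S // S ∈ V1} → Finset (Finset (Fin n)) :=
    (fun S => (S.valᶜ).image (fun x => insert x S.val)) with ht
  have hmemV1 : ∀ S : Finset (Fin n),
      (S.card = d + 2 ∧ ∀ A : Finset (Fin n), A.card = d → S ∉ fInterval A (F A)) ↔
        S ∈ V1 := by
    intro S
    rw [hV1, Finset.mem_filter]
    simp
  have hScard : ∀ S : {S // S ∈ V1}, S.val.card = d + 2 := by
    intro S
    exact ((hmemV1 S.val).mpr S.2).1
  have htcard : ∀ S : {S // S ∈ V1}, (t S).card = 3 * d + 1 := by
    intro S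
    simp only [ht]
    rw [Finset.card_image_of_injOn]
    · rw [Finset.card_compl, hScard S, Fintype.card_fin]
      omega
    · intro a ha b hb hab
      simp only [Finset.coe_compl, Set.mem_compl_iff, Finset.mem_coe] at ha hb
      by_contra hne
      have hab' : insert a S.val = insert b S.val := hab
      have : a ∈ insert b S.val := hab' ▸ Finset.mem_insert_self a S.val
      rcases Finset.mem_insert.mp this with h | h
      exacts [hne h, ha h]
  have hall : ∀ s : Finset {S // S ∈ V1}, s.card ≤ (s.biUnion t).card := by
    intro s
    have hfiber : ∀ T ∈ s.biUnion t, (s.filter (fun S => T ∈ t S)).card ≤ d + 3 := by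
      intro T hT
      obtain ⟨S₀, hS₀s, hTS₀⟩ := Finset.mem_biUnion.mp hT
      have hTcard : T.card = d + 3 := by
        simp only [ht] at hTS₀
        obtain ⟨x₀, hx₀, rfl⟩ := Finset.mem_image.mp hTS₀
        rw [Finset.card_insert_of_notMem (Finset.mem_compl.mp hx₀), hScard S₀]
      calc (s.filter (fun S => T ∈ t S)).card
          ≤ (T.image (fun x => T.erase x)).card := by
            apply Finset.card_le_card_of_injOn (fun S => S.val)
            · intro S hS
              obtain ⟨-, hTS⟩ := Finset.mem_filter.mp hS
              simp only [ht] at hTS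
              obtain ⟨x, hxc, hxi⟩ := Finset.mem_image.mp hTS
              refine Finset.mem_image.mpr ⟨x, ?_, ?_⟩
              · rw [← hxi]
                exact Finset.mem_insert_self x S.val
              · rw [← hxi, Finset.erase_insert (Finset.mem_compl.mp hxc)]
            · intro S₁ _ S₂ _ h
              exact Subtype.ext h
        _ ≤ T.card := Finset.card_image_le
        _ = d + 3 := hTcard
    have hswap : ∑ S ∈ s, (t S).card
        = ∑ T ∈ s.biUnion t, (s.filter (fun S => T ∈ t S)).card := by
      calc ∑ S ∈ s, (t S).card
          = ∑ S ∈ s, ∑ T ∈ s.biUnion t, (if T ∈ t S then 1 else 0) := by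
            refine Finset.sum_congr rfl (fun S hS => ?_)
            rw [Finset.sum_ite_mem, Finset.inter_eq_right.mpr
              (Finset.subset_biUnion_of_mem t hS), Finset.sum_const, smul_eq_mul, mul_one]
        _ = ∑ T ∈ s.biUnion t, ∑ S ∈ s, (if T ∈ t S then 1 else 0) := Finset.sum_comm
        _ = ∑ T ∈ s.biUnion t, (s.filter (fun S => T ∈ t S)).card := by
            refine Finset.sum_congr rfl (fun T hT => ?_)
            rw [Finset.card_filter]
    have hcount : s.card * (3 * d + 1) ≤ (s.biUnion t).card * (3 * d + 1) := by
      calc s.card * (3 * d + 1) = ∑ S ∈ s, (t S).card := by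
            rw [Finset.sum_congr rfl (fun S _ => htcard S), Finset.sum_const, smul_eq_mul]
        _ = ∑ T ∈ s.biUnion t, (s.filter (fun S => T ∈ t S)).card := hswap
        _ ≤ ∑ _T ∈ s.biUnion t, (3 * d + 1) :=
            Finset.sum_le_sum (fun T hT => le_trans (hfiber T hT) (by omega))
        _ = (s.biUnion t).card * (3 * d + 1) := by
            rw [Finset.sum_const, smul_eq_mul]
    exact Nat.le_of_mul_le_mul_right hcount (by omega)
  obtain ⟨f, hfinj, hft⟩ := (Finset.all_card_le_biUnion_card_iff_exists_injective t).mp hall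
  refine ⟨fun S => if h : S ∈ V1 then f ⟨S, h⟩ else S, ?_, ?_⟩
  · intro S₁ h₁ S₂ h₂ heq
    have m₁ : S₁ ∈ V1 := (hmemV1 S₁).mp h₁
    have m₂ : S₂ ∈ V1 := (hmemV1 S₂).mp h₂
    simp only [dif_pos m₁, dif_pos m₂] at heq
    exact congrArg Subtype.val (hfinj heq)
  · intro S hS
    have m : S ∈ V1 := (hmemV1 S).mp hS
    simp only [dif_pos m]
    have hft' := hft ⟨S, m⟩
    simp only [ht] at hft'
    obtain ⟨x, hxc, hxe⟩ := Finset.mem_image.mp hft'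
    have hxS : x ∉ S := Finset.mem_compl.mp hxc
    rw [← hxe]
    refine ⟨Finset.subset_insert x S, ?_, ?_⟩
    · rw [Finset.card_insert_of_notMem hxS, hS.1]
    · intro A hA
      exact hsup S hS.1 hS.2 x hxS A hA
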